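/- Every component of the open-circuit load voltage vector V_L* = −B_LL⁻¹ B_LG V_G is strictly positive. -/

import Mathlib

open Matrix

/-- The load–load block of the susceptance matrix. -/
def BLL {n m : ℕ} (B : Matrix (Fin n ⊕ Fin m) (Fin n ⊕ Fin m) ℝ) :
    Matrix (Fin n) (Fin n) ℝ :=
  Matrix.of fun i j => B (Sum.inl i) (Sum.inl j)

/-- The load–generator block of the susceptance matrix. -/
def BLG {n m : ℕ} (B : Matrix (Fin n ⊕ Fin m) (Fin n ⊕ Fin m) ℝ) :
    Matrix (Fin n) (Fin m) ℝ :=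
  Matrix.of fun i j => B (Sum.inl i) (Sum.inr j)

/-- Open-circuit load voltages  V_L* = −B_LL⁻¹ B_LG V_G. -/
noncomputable def VLstar {n m : ℕ} (B : Matrix (Fin n ⊕ Fin m) (Fin n ⊕ Fin m) ℝ)
    (VG : Fin m → ℝ) : Fin n → ℝ :=
  -((BLL B)⁻¹.mulVec ((BLG B).mulVec VG))

/-- Every component of the open-circuit load voltage vector V_L* = −B_LL⁻¹ B_LG V_G
is strictly positive. -/
theorem stmt2 {n m : ℕ} (hn : 0 < n) (hm : 0 < m)
    (B : Matrix (Fin n ⊕ Fin m) (Fin n ⊕ Fin m) ℝ)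
    (VG : Fin m → ℝ)
    (hsym : Bᵀ = B)
    (hoffdiag : ∀ a b : Fin n ⊕ Fin m, a ≠ b → 0 ≤ B a b)
    (hconn : ∀ a b : Fin n ⊕ Fin m,
      Relation.ReflTransGen (fun x y => x ≠ y ∧ 0 < B x y) a b)
    (hBLL : (-(BLL B)).PosDef)
    (hVG : ∀ j, 0 < VG j) :
    ∀ i : Fin n, 0 < VLstar B VG i := by
  rw [show VLstar B VG = -((BLL B)⁻¹.mulVec ((BLG B).mulVec VG)) from rfl]
  set M : Matrix (Fin n) (Fin n) ℝ := BLL B with hMdef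
  set C : Matrix (Fin n) (Fin m) ℝ := BLG B with hCdef
  set x : Fin n → ℝ := -(M⁻¹.mulVec (C.mulVec VG)) with hxdef
  -- invertibility of M
  have hdet : IsUnit M.det := by
    have h := hBLL.det_pos
    rw [Matrix.det_neg] at h
    have : M.det ≠ 0 := by intro h0; rw [h0] at h; simp at h
    exact isUnit_iff_ne_zero.mpr this
  -- balance equation
  have hbal : M.mulVec x + C.mulVec VG = 0 := by
    rw [hxdef, Matrix.mulVec_neg, Matrix.mulVec_mulVec, Matrix.mul_nonsing_inv _ hdet,
      Matrix.one_mulVec]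
    simp
  have hbal' : ∀ i, (∑ j, M i j * x j) + (∑ j, C i j * VG j) = 0 := by
    intro i
    have := congrFun hbal i
    simpa [Matrix.mulVec, dotProduct] using this
  -- C entries nonneg
  have hC : ∀ i j, 0 ≤ C i j := fun i j => hoffdiag _ _ (by simp)
  have hMoff : ∀ i j : Fin n, i ≠ j → 0 ≤ M i j := fun i j hij =>
    hoffdiag _ _ (by simpa using hij)
  -- step 1: x ≥ 0
  have hxnn : ∀ i, 0 ≤ x i := by
    by_contra hcon
    push_neg at hcon
    set z : Fin n → ℝ := fun i => min (x i) 0 with hzdef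
    have hzne : z ≠ 0 := by
      obtain ⟨i, hi⟩ := hcon
      intro h0
      have := congrFun h0 i
      simp [hzdef] at this
      linarith [min_le_left (x i) (0:ℝ)]
    have hpos := hBLL.dotProduct_mulVec_pos hzne
    have hle : dotProduct (star z) ((-M) *ᵥ z) ≤ 0 := by
      rw [show star z = z from rfl]
      rw [dotProduct]
      apply Finset.sum_nonpos
      intro i _
      simp only [Matrix.mulVec, dotProduct, Matrix.neg_apply]
      rcases le_or_gt 0 (x i) with hxi | hxi
      · have : z i = 0 := by simp [hzdef, hxi]
        simp [this]
      · have hzi : z i = x i := by simp [hzdef, le_of_lt hxi]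
        have hsum1 : (∑ j, M i j * x j) ≤ 0 := by
          have h2 : 0 ≤ ∑ j, C i j * VG j :=
            Finset.sum_nonneg fun j _ => mul_nonneg (hC i j) (le_of_lt (hVG j))
          linarith [hbal' i]
        have hsum2 : 0 ≤ ∑ j, M i j * (x j - z j) := by
          apply Finset.sum_nonneg
          intro j _
          rcases eq_or_ne j i with rfl | hji
          · simp [hzi]
          · have hxz : 0 ≤ x j - z j := by
              rcases le_or_gt 0 (x j) with h | h
              · simp [hzdef, h]
              · simp [hzdef, le_of_lt h]
            exact mul_nonneg (hMoff i j (Ne.symm hji)) hxz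
        have key : ∑ j, (-M) i j * z j = -(∑ j, M i j * x j) + ∑ j, M i j * (x j - z j) := by
          rw [← Finset.sum_neg_distrib, ← Finset.sum_add_distrib]
          apply Finset.sum_congr rfl
          intro j _
          simp [Matrix.neg_apply]; ring
        calc z i * ∑ j, -M i j * z j = z i * ∑ j, (-M) i j * z j := by simp
          _ = z i * (-(∑ j, M i j * x j) + ∑ j, M i j * (x j - z j)) := by rw [key]
          _ ≤ 0 := by
              rw [hzi]
              have h1 : 0 ≤ x i * (∑ j, M i j * x j) := by nlinarith
              have h2 : x i * (∑ j, M i j * (x j - z j)) ≤ 0 :=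
                mul_nonpos_of_nonpos_of_nonneg (le_of_lt hxi) hsum2
              nlinarith
    linarith
  -- step 2: strict positivity via connectivity
  set W : Fin n ⊕ Fin m → ℝ := Sum.elim x VG with hWdef
  have hWnn : ∀ a, 0 ≤ W a := by
    rintro (i | j)
    · exact hxnn i
    · exact le_of_lt (hVG j)
  have hbalW : ∀ i : Fin n, ∑ b, B (Sum.inl i) b * W b = 0 := by
    intro i
    rw [Fintype.sum_sum_type]
    simpa [hWdef, hMdef, hCdef, BLL, BLG] using hbal' i
  -- zero propagation
  have hprop : ∀ a, Relation.ReflTransGen (fun x y => x ≠ y ∧ 0 < B x y) a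
      (Sum.inr ⟨0, hm⟩) → W a = 0 → False := by
    intro a hpath
    induction hpath using Relation.ReflTransGen.head_induction_on with
    | refl =>
      intro h0
      have := hVG ⟨0, hm⟩
      simp [hWdef] at h0
      linarith
    | head hrel _ ih =>
      rename_i a' c _
      intro h0
      obtain ⟨hne, hpos⟩ := hrel
      match a', h0 with
      | Sum.inr j, h0 =>
        have := hVG j
        simp [hWdef] at h0
        linarith
      | Sum.inl i, h0 =>
        -- all off-diagonal terms vanish
        have hdiagzero : B (Sum.inl i) (Sum.inl i) * W (Sum.inl i) = 0 := by
          rw [h0]; ring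
        have hsplit : ∑ b ∈ Finset.univ.erase (Sum.inl i), B (Sum.inl i) b * W b = 0 := by
          have := hbalW i
          rw [← Finset.add_sum_erase _ _ (Finset.mem_univ (Sum.inl i))] at this
          rw [hdiagzero] at this
          linarith
        have hterms : ∀ b ∈ Finset.univ.erase (Sum.inl i), 0 ≤ B (Sum.inl i) b * W b := by
          intro b hb
          have hbne : b ≠ Sum.inl i := Finset.ne_of_mem_erase hb
          exact mul_nonneg (hoffdiag _ _ (Ne.symm hbne)) (hWnn b)
        have hzero := (Finset.sum_eq_zero_iff_of_nonneg hterms).mp hsplit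
        have hcmem : c ∈ Finset.univ.erase (Sum.inl i) := by
          simp [Finset.mem_erase]
          exact Ne.symm hne
        have := hzero c hcmem
        have hWc : W c = 0 := by
          rcases mul_eq_zero.mp this with h | h
          · linarith
          · exact h
        exact ih hWc
  intro i
  rcases lt_or_eq_of_le (hxnn i) with h | h
  · exact h
  · exfalso
    exact hprop (Sum.inl i) (hconn _ _) (by simp [hWdef, ← h])
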